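/- Let S³ = {s ∈ ℍ : |s| = 1} be the group of unit quaternions, and consider the action of T³ on S³ × S³ given by (t₁,t₂,t₃)·(s₁,s₂) = (t₁·s₁·t₂⁻¹, t₂·s₂·t₃), where t₁,t₂,t₃ are complex numbers of modulus 1 acting via the standard inclusion ℂ ⊂ ℍ. Then the orbit space (S³ × S³)/T³ is homeomorphic to S³. -/

import Mathlib

/-- The standard inclusion ℂ ⊂ ℍ : `z = a + b·i ↦ a + b·i ∈ ℍ`. -/
noncomputable def toQ (z : ℂ) : Quaternion ℝ := ⟨z.re, z.im, 0, 0⟩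

/-- The group `S³` of unit quaternions. -/
abbrev S3 : Type := {s : Quaternion ℝ // ‖s‖ = 1}

/-- `(s₁,s₂) ~ (t₁ s₁ t₂⁻¹, t₂ s₂ t₃)` for unit complex numbers `t₁,t₂,t₃`. -/
def rel16 (x y : S3 × S3) : Prop :=
  ∃ t₁ t₂ t₃ : ℂ, ‖t₁‖ = 1 ∧ ‖t₂‖ = 1 ∧ ‖t₃‖ = 1 ∧
    y.1.1 = toQ t₁ * x.1.1 * (toQ t₂)⁻¹ ∧ y.2.1 = toQ t₂ * x.2.1 * toQ t₃

section Aux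
open Complex

local notation "conj'" => (starRingEnd ℂ)

/-- first complex coordinate of a quaternion `s = z + w·j`. -/
def Zc (s : Quaternion ℝ) : ℂ := ⟨s.re, s.imI⟩
/-- second complex coordinate. -/
def Wc (s : Quaternion ℝ) : ℂ := ⟨s.imJ, s.imK⟩

lemma Zc_mul (a b : Quaternion ℝ) :
    Zc (a * b) = Zc a * Zc b - Wc a * conj' (Wc b) := by
  apply Complex.ext <;>
    simp [Zc, Wc, Quaternion.re_mul, Quaternion.imI_mul, Complex.mul_re, Complex.mul_im] <;> ring

lemma Wc_mul (a b : Quaternion ℝ) :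
    Wc (a * b) = Zc a * Wc b + Wc a * conj' (Zc b) := by
  apply Complex.ext <;>
    simp [Zc, Wc, Quaternion.imJ_mul, Quaternion.imK_mul, Complex.mul_re, Complex.mul_im] <;> ring

lemma Zc_toQ (t : ℂ) : Zc (toQ t) = t := rfl
lemma Wc_toQ (t : ℂ) : Wc (toQ t) = 0 := rfl

lemma quat_ext_ZW {a b : Quaternion ℝ} (h1 : Zc a = Zc b) (h2 : Wc a = Wc b) : a = b := by
  have e1 := congrArg Complex.re h1
  have e2 := congrArg Complex.im h1
  have e3 := congrArg Complex.re h2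
  have e4 := congrArg Complex.im h2
  ext <;> assumption

lemma normSq_unit {t : ℂ} (ht : ‖t‖ = 1) : Complex.normSq t = 1 := by
  rw [Complex.normSq_eq_norm_sq, ht]; norm_num

lemma conj_mul_unit {t : ℂ} (ht : ‖t‖ = 1) : t * conj' t = 1 := by
  rw [Complex.mul_conj, normSq_unit ht]; norm_num

lemma normSq_Zc_add_Wc (s : Quaternion ℝ) :
    Complex.normSq (Zc s) + Complex.normSq (Wc s) = ‖s‖ * ‖s‖ := by
  rw [← Quaternion.normSq_eq_norm_mul_self]
  simp [Zc, Wc, Complex.normSq_apply, Quaternion.normSq_def']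
  ring

lemma Zc_one : Zc 1 = 1 := rfl
lemma Wc_one : Wc 1 = 0 := rfl

lemma ZL (t : ℂ) (s : Quaternion ℝ) : Zc (toQ t * s) = t * Zc s := by
  rw [Zc_mul, Zc_toQ, Wc_toQ]; simp
lemma WL (t : ℂ) (s : Quaternion ℝ) : Wc (toQ t * s) = t * Wc s := by
  rw [Wc_mul, Zc_toQ, Wc_toQ]; simp
lemma ZR (t : ℂ) (s : Quaternion ℝ) : Zc (s * toQ t) = Zc s * t := by
  rw [Zc_mul, Zc_toQ, Wc_toQ]; simp
lemma WR (t : ℂ) (s : Quaternion ℝ) : Wc (s * toQ t) = Wc s * conj' t := by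
  rw [Wc_mul, Zc_toQ, Wc_toQ]; simp

lemma toQ_inv {t : ℂ} (ht : ‖t‖ = 1) : (toQ t)⁻¹ = toQ (conj' t) := by
  refine inv_eq_of_mul_eq_one_right ?_
  apply quat_ext_ZW
  · rw [ZL, Zc_toQ, Zc_one, conj_mul_unit ht]
  · rw [WL, Wc_toQ, Wc_one, mul_zero]

/-- `rel16` in complex coordinates. -/
lemma rel16_iff (x y : S3 × S3) : rel16 x y ↔
    ∃ t₁ t₂ t₃ : ℂ, ‖t₁‖ = 1 ∧ ‖t₂‖ = 1 ∧ ‖t₃‖ = 1 ∧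
      Zc y.1.1 = t₁ * Zc x.1.1 * conj' t₂ ∧ Wc y.1.1 = t₁ * Wc x.1.1 * t₂ ∧
      Zc y.2.1 = t₂ * Zc x.2.1 * t₃ ∧ Wc y.2.1 = t₂ * Wc x.2.1 * conj' t₃ := by
  constructor
  · rintro ⟨t₁, t₂, t₃, h1, h2, h3, e1, e2⟩
    rw [toQ_inv h2] at e1
    refine ⟨t₁, t₂, t₃, h1, h2, h3, ?_, ?_, ?_, ?_⟩
    · rw [e1, ZR, ZL]
    · rw [e1, WR, WL, Complex.conj_conj]
    · rw [e2, ZR, ZL]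
    · rw [e2, WR, WL]
  · rintro ⟨t₁, t₂, t₃, h1, h2, h3, e1, e2, e3, e4⟩
    refine ⟨t₁, t₂, t₃, h1, h2, h3, ?_, ?_⟩
    · rw [toQ_inv h2]
      apply quat_ext_ZW
      · rw [ZR, ZL, e1]
      · rw [WR, WL, Complex.conj_conj, e2]
    · apply quat_ext_ZW
      · rw [ZR, ZL, e3]
      · rw [WR, WL, e4]


/-- invariant functions -/
noncomputable def Amap (x : S3 × S3) : ℝ := Complex.normSq (Zc x.1.1) - Complex.normSq (Wc x.1.1)
noncomputable def Bmap (x : S3 × S3) : ℝ := Complex.normSq (Zc x.2.1) - Complex.normSq (Wc x.2.1)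
noncomputable def Cmap (x : S3 × S3) : ℂ := 4 * (Zc x.1.1 * conj' (Wc x.1.1) * Zc x.2.1 * Wc x.2.1)

lemma sum_one (s : S3) : Complex.normSq (Zc s.1) + Complex.normSq (Wc s.1) = 1 := by
  rw [normSq_Zc_add_Wc, s.2]; norm_num

lemma invariant_of_rel {x y : S3 × S3} (h : rel16 x y) :
    Amap y = Amap x ∧ Bmap y = Bmap x ∧ Cmap y = Cmap x := by
  rw [rel16_iff] at h
  obtain ⟨t₁, t₂, t₃, h1, h2, h3, e1, e2, e3, e4⟩ := h
  have n1 := normSq_unit h1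
  have n2 := normSq_unit h2
  have n3 := normSq_unit h3
  have c1 := conj_mul_unit h1
  have c2 := conj_mul_unit h2
  have c3 := conj_mul_unit h3
  refine ⟨?_, ?_, ?_⟩
  · unfold Amap
    rw [e1, e2]
    simp only [map_mul, Complex.normSq_conj]
    rw [n1, n2]; ring
  · unfold Bmap
    rw [e3, e4]
    simp only [map_mul, Complex.normSq_conj]
    rw [n2, n3]; ring
  · have key : Cmap y = (t₁ * conj' t₁) * ((t₂ * conj' t₂) * (t₂ * conj' t₂)) *
        (t₃ * conj' t₃) * Cmap x := by
      unfold Cmap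
      rw [e1, e2, e3, e4]
      simp only [map_mul, Complex.conj_conj]
      ring
    rw [key, c1, c2, c3]; ring

lemma L1 {a b : ℂ} (h : Complex.normSq a = Complex.normSq b) :
    ∃ t : ℂ, ‖t‖ = 1 ∧ b = t * a := by
  rcases eq_or_ne a 0 with ha | ha
  · refine ⟨1, by norm_num, ?_⟩
    have : Complex.normSq b = 0 := by rw [← h, ha, map_zero]
    rw [Complex.normSq_eq_zero] at this
    rw [this, ha, mul_zero]
  · refine ⟨b / a, ?_, by field_simp⟩
    have hna : ‖a‖ ≠ 0 := by simpa using ha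
    have : ‖a‖ = ‖b‖ := by
      have := congrArg Real.sqrt (congrArg id h)
      simpa [Complex.normSq_eq_norm_sq, Real.sqrt_sq_eq_abs,
        Real.sqrt_sq, norm_nonneg] using this
    rw [norm_div, ← this, div_self hna]

lemma Lsqrt {s : ℂ} (hs : ‖s‖ = 1) : ∃ t : ℂ, ‖t‖ = 1 ∧ t * t = s := by
  have hs0 : s ≠ 0 := by intro h; rw [h] at hs; simp at hs
  refine ⟨Complex.exp (Complex.log s / 2), ?_, ?_⟩
  · have h2 : Complex.exp (Complex.log s / 2) * Complex.exp (Complex.log s / 2) = s := by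
      rw [← Complex.exp_add]
      ring_nf
      exact Complex.exp_log hs0
    have := congrArg norm h2
    rw [norm_mul, hs] at this
    nlinarith [norm_nonneg (Complex.exp (Complex.log s / 2))]
  · rw [← Complex.exp_add]
    ring_nf
    exact Complex.exp_log hs0

/-- solve the right pair: `z' = t₂ z t₃`, `w' = t₂ w (conj t₃)`. -/
lemma L2 {z w z' w' : ℂ} (hz : Complex.normSq z = Complex.normSq z')
    (hw : Complex.normSq w = Complex.normSq w') :
    ∃ t₂ t₃ : ℂ, ‖t₂‖ = 1 ∧ ‖t₃‖ = 1 ∧ z' = t₂ * z * t₃ ∧ w' = t₂ * w * conj' t₃ := by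
  obtain ⟨d, hd, hzd⟩ := L1 hz
  obtain ⟨e, he, hwe⟩ := L1 hw
  obtain ⟨t₂, ht₂, ht₂sq⟩ := Lsqrt (s := d * e) (by rw [norm_mul, hd, he]; norm_num)
  refine ⟨t₂, conj' t₂ * d, ht₂, by simp [ht₂, hd], ?_, ?_⟩
  · rw [hzd]
    linear_combination (-(d * z)) * conj_mul_unit ht₂
  · rw [hwe]
    simp only [map_mul, Complex.conj_conj]
    linear_combination (-(conj' d * w)) * ht₂sq + (-(e * w)) * conj_mul_unit hd

/-- solve the left pair: `z' = t₁ z (conj t₂)`, `w' = t₁ w t₂`. -/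
lemma L2' {z w z' w' : ℂ} (hz : Complex.normSq z = Complex.normSq z')
    (hw : Complex.normSq w = Complex.normSq w') :
    ∃ t₁ t₂ : ℂ, ‖t₁‖ = 1 ∧ ‖t₂‖ = 1 ∧ z' = t₁ * z * conj' t₂ ∧ w' = t₁ * w * t₂ := by
  obtain ⟨a, ha, hza⟩ := L1 hz
  obtain ⟨b, hb, hwb⟩ := L1 hw
  obtain ⟨t₁, ht₁, ht₁sq⟩ := Lsqrt (s := a * b) (by rw [norm_mul, ha, hb]; norm_num)
  have cb := conj_mul_unit hb
  refine ⟨t₁, conj' t₁ * b, ht₁, by simp [ht₁, hb], ?_, ?_⟩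
  · rw [hza]
    simp only [map_mul, Complex.conj_conj]
    linear_combination (-(conj' b * z)) * ht₁sq + (-(a * z)) * cb
  · rw [hwb]
    linear_combination (-(b * w)) * conj_mul_unit ht₁

lemma normSq_zero_of {u v : ℂ} (h : Complex.normSq u = Complex.normSq v) (hu : u = 0) :
    v = 0 := by
  rw [← Complex.normSq_eq_zero, ← h, hu, map_zero]

/-- the fibers of the invariants are single orbits (complex-coordinate version). -/
lemma fiberC {z₁ w₁ z₂ w₂ z₁' w₁' z₂' w₂' : ℂ}
    (h1 : Complex.normSq z₁ = Complex.normSq z₁') (h2 : Complex.normSq w₁ = Complex.normSq w₁')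
    (h3 : Complex.normSq z₂ = Complex.normSq z₂') (h4 : Complex.normSq w₂ = Complex.normSq w₂')
    (hc : z₁ * conj' w₁ * z₂ * w₂ = z₁' * conj' w₁' * z₂' * w₂') :
    ∃ t₁ t₂ t₃ : ℂ, ‖t₁‖ = 1 ∧ ‖t₂‖ = 1 ∧ ‖t₃‖ = 1 ∧
      z₁' = t₁ * z₁ * conj' t₂ ∧ w₁' = t₁ * w₁ * t₂ ∧
      z₂' = t₂ * z₂ * t₃ ∧ w₂' = t₂ * w₂ * conj' t₃ := by
  by_cases hz₁ : z₁ = 0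
  · obtain ⟨t₂, t₃, ht₂, ht₃, e3, e4⟩ := L2 h3 h4
    obtain ⟨e, he, hwe⟩ := L1 h2
    refine ⟨e * conj' t₂, t₂, t₃, by simp [he, ht₂], ht₂, ht₃, ?_, ?_, e3, e4⟩
    · rw [normSq_zero_of h1 hz₁, hz₁]; ring
    · rw [hwe]
      linear_combination (-(e * w₁)) * conj_mul_unit ht₂
  · by_cases hw₁ : w₁ = 0
    · obtain ⟨t₂, t₃, ht₂, ht₃, e3, e4⟩ := L2 h3 h4
      obtain ⟨a, ha, hza⟩ := L1 h1
      refine ⟨a * t₂, t₂, t₃, by simp [ha, ht₂], ht₂, ht₃, ?_, ?_, e3, e4⟩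
      · rw [hza]
        linear_combination (-(a * z₁)) * conj_mul_unit ht₂
      · rw [normSq_zero_of h2 hw₁, hw₁]; ring
    · by_cases hz₂ : z₂ = 0
      · obtain ⟨t₁, t₂, ht₁, ht₂, e1, e2⟩ := L2' h1 h2
        obtain ⟨e, he, hwe⟩ := L1 h4
        refine ⟨t₁, t₂, t₂ * conj' e, ht₁, ht₂, by simp [ht₂, he], e1, e2, ?_, ?_⟩
        · rw [normSq_zero_of h3 hz₂, hz₂]; ring
        · rw [hwe]
          simp only [map_mul, Complex.conj_conj]
          linear_combination (-(e * w₂)) * conj_mul_unit ht₂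
      · by_cases hw₂ : w₂ = 0
        · obtain ⟨t₁, t₂, ht₁, ht₂, e1, e2⟩ := L2' h1 h2
          obtain ⟨d, hd, hzd⟩ := L1 h3
          refine ⟨t₁, t₂, conj' t₂ * d, ht₁, ht₂, by simp [ht₂, hd], e1, e2, ?_, ?_⟩
          · rw [hzd]
            linear_combination (-(d * z₂)) * conj_mul_unit ht₂
          · rw [normSq_zero_of h4 hw₂, hw₂]; ring
        · -- main case: all coordinates nonzero
          obtain ⟨a, ha, hza⟩ := L1 h1
          obtain ⟨b, hb, hwb⟩ := L1 h2
          obtain ⟨d, hd, hzd⟩ := L1 h3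
          obtain ⟨e, he, hwe⟩ := L1 h4
          have ca := conj_mul_unit ha
          have cb := conj_mul_unit hb
          have cd := conj_mul_unit hd
          have key : a * conj' b * d * e = 1 := by
            have hcw : conj' w₁ ≠ 0 := by simpa using hw₁
            have hprod : z₁ * conj' w₁ * z₂ * w₂ ≠ 0 :=
              mul_ne_zero (mul_ne_zero (mul_ne_zero hz₁ hcw) hz₂) hw₂
            have h0 : (a * conj' b * d * e - 1) * (z₁ * conj' w₁ * z₂ * w₂) = 0 := by
              rw [hza, hwb, hzd, hwe] at hc
              simp only [map_mul] at hc
              linear_combination (-1 : ℂ) * hc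
            rcases mul_eq_zero.mp h0 with h | h
            · exact sub_eq_zero.mp h
            · exact absurd h hprod
          obtain ⟨t₁, ht₁, ht₁sq⟩ := Lsqrt (s := a * b) (by rw [norm_mul, ha, hb]; norm_num)
          have ht₂n : ‖conj' t₁ * b‖ = 1 := by simp [ht₁, hb]
          have cmt₁ := conj_mul_unit ht₁
          have cmt₂ := conj_mul_unit ht₂n
          have hconjsq : conj' t₁ * conj' t₁ = conj' a * conj' b := by
            have := congrArg conj' ht₁sq
            simpa [map_mul] using this
          have he' : e = conj' a * b * conj' d := by
            linear_combination (conj' a * b * conj' d) * key + (-(e)) * ca +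
              (-(e * (a * conj' a))) * cb + (-(e * (a * conj' a) * (b * conj' b))) * cd
          refine ⟨t₁, conj' t₁ * b, conj' (conj' t₁ * b) * d, ht₁, ht₂n,
            by simp [ht₁, hb, hd], ?_, ?_, ?_, ?_⟩
          · rw [hza]
            simp only [map_mul, Complex.conj_conj]
            linear_combination (-(conj' b * z₁)) * ht₁sq + (-(a * z₁)) * cb
          · rw [hwb]
            linear_combination (-(b * w₁)) * cmt₁
          · rw [hzd]
            linear_combination (-(d * z₂)) * cmt₂
          · rw [hwe]
            simp only [map_mul, Complex.conj_conj]
            linear_combination (-(b * b * conj' d * w₂)) * hconjsq + w₂ * he' +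
              (-(conj' a * b * conj' d * w₂)) * cb

/-! ### the invariant vector map -/

noncomputable def Fv (x : S3 × S3) : EuclideanSpace ℝ (Fin 4) :=
  (WithLp.equiv 2 (Fin 4 → ℝ)).symm ![Amap x, Bmap x, (Cmap x).re, (Cmap x).im]

lemma Fv_zero (x : S3 × S3) : Fv x 0 = Amap x := by simp [Fv, WithLp.equiv_symm_apply, PiLp.toLp_apply]
lemma Fv_one (x : S3 × S3) : Fv x 1 = Bmap x := by simp [Fv, WithLp.equiv_symm_apply, PiLp.toLp_apply]
lemma Fv_two (x : S3 × S3) : Fv x 2 = (Cmap x).re := by simp [Fv, WithLp.equiv_symm_apply, PiLp.toLp_apply]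
lemma Fv_three (x : S3 × S3) : Fv x 3 = (Cmap x).im := by simp [Fv, WithLp.equiv_symm_apply, PiLp.toLp_apply]

lemma norm_sq_euclid (x : EuclideanSpace ℝ (Fin 4)) : ‖x‖^2 = ∑ i, x i^2 := by
  rw [EuclideanSpace.norm_eq, Real.sq_sqrt (by positivity)]
  simp [sq_abs]

lemma norm_Fv_sq (x : S3 × S3) :
    ‖Fv x‖^2 = Amap x^2 + Bmap x^2 + Complex.normSq (Cmap x) := by
  rw [norm_sq_euclid, Fin.sum_univ_four, Fv_zero, Fv_one, Fv_two, Fv_three,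
    Complex.normSq_apply]
  ring

lemma helper_prod (p q r s : ℝ) (h1 : p + q = 1) (h2 : r + s = 1) :
    16 * (p * q * r * s) = (1 - (p - q)^2) * (1 - (r - s)^2) := by
  have hq : q = 1 - p := by linarith
  have hs : s = 1 - r := by linarith
  subst hq hs; ring

lemma normSq_Cmap (x : S3 × S3) :
    Complex.normSq (Cmap x) = (1 - Amap x^2) * (1 - Bmap x^2) := by
  have e1 := sum_one x.1
  have e2 := sum_one x.2
  have key := helper_prod _ _ _ _ e1 e2
  unfold Cmap Amap Bmap
  simp only [map_mul, Complex.normSq_conj]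
  have h4 : Complex.normSq (4 : ℂ) = 16 := by norm_num [Complex.normSq_apply]
  rw [h4]
  linarith [key]

lemma Amap_sq_le (x : S3 × S3) : Amap x^2 ≤ 1 := by
  have e1 := sum_one x.1
  have n1 := Complex.normSq_nonneg (Zc x.1.1)
  have n2 := Complex.normSq_nonneg (Wc x.1.1)
  unfold Amap
  nlinarith

lemma Bmap_sq_le (x : S3 × S3) : Bmap x^2 ≤ 1 := by
  have e2 := sum_one x.2
  have n1 := Complex.normSq_nonneg (Zc x.2.1)
  have n2 := Complex.normSq_nonneg (Wc x.2.1)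
  unfold Bmap
  nlinarith

lemma one_le_norm_Fv_sq (x : S3 × S3) : 1 ≤ ‖Fv x‖^2 := by
  rw [norm_Fv_sq, normSq_Cmap]
  nlinarith [sq_nonneg (Amap x * Bmap x)]

lemma one_le_norm_Fv (x : S3 × S3) : 1 ≤ ‖Fv x‖ := by
  nlinarith [one_le_norm_Fv_sq x, norm_nonneg (Fv x)]

lemma norm_Fv_pos (x : S3 × S3) : 0 < ‖Fv x‖ := lt_of_lt_of_le one_pos (one_le_norm_Fv x)

/-! ### radial uniqueness -/

lemma radial {u v u' v' : ℝ} {c c' : ℂ} {l : ℝ} (hl : 1 ≤ l)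
    (hu : u^2 ≤ 1) (hv : v^2 ≤ 1) (hu' : u'^2 ≤ 1) (hv' : v'^2 ≤ 1)
    (hc : Complex.normSq c = (1 - u^2) * (1 - v^2))
    (hc' : Complex.normSq c' = (1 - u'^2) * (1 - v'^2))
    (e1 : u' = l * u) (e2 : v' = l * v) (e3 : c' = (l : ℂ) * c) : l = 1 := by
  by_contra hne
  have hl1 : 1 < l := lt_of_le_of_ne hl (Ne.symm hne)
  have hsq : Complex.normSq c' = l^2 * Complex.normSq c := by
    rw [e3, map_mul, Complex.normSq_ofReal]; ring
  rw [hc, hc'] at hsq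
  rw [e1] at hu' hsq
  rw [e2] at hv' hsq
  have hl2 : (0:ℝ) < l^2 - 1 := by nlinarith
  have hPle : (1 - u^2) * (1 - v^2) ≤ 0 := by
    nlinarith [hl2, hsq,
      mul_nonneg (mul_nonneg (sq_nonneg u) (sub_nonneg.2 hv)) hl2.le,
      mul_nonneg (mul_nonneg (sub_nonneg.2 hu') (sq_nonneg v)) hl2.le]
  have hP : (1 - u^2) * (1 - v^2) = 0 :=
    le_antisymm hPle (mul_nonneg (sub_nonneg.2 hu) (sub_nonneg.2 hv))
  rcases mul_eq_zero.mp hP with h | h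
  · nlinarith
  · nlinarith

/-! ### construction of points with given invariants -/

/-- build a quaternion from two complex coordinates. -/
def mkQ (z w : ℂ) : Quaternion ℝ := ⟨z.re, z.im, w.re, w.im⟩

/-- build an `S3` point from two complex coordinates. -/
noncomputable def mkS (z w : ℂ) (h : Complex.normSq z + Complex.normSq w = 1) : S3 :=
  ⟨mkQ z w, by
    have hn : ‖mkQ z w‖ * ‖mkQ z w‖ = 1 := by
      rw [← Quaternion.normSq_eq_norm_mul_self, Quaternion.normSq_def']
      simp only [Complex.normSq_apply] at h
      simp only [mkQ]
      nlinarith [h]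
    nlinarith [norm_nonneg (mkQ z w)]⟩

lemma Zc_mkS (z w : ℂ) (h) : Zc (mkS z w h).1 = z := rfl
lemma Wc_mkS (z w : ℂ) (h) : Wc (mkS z w h).1 = w := rfl

set_option maxHeartbeats 1000000 in
lemma exists_point {u v : ℝ} {c : ℂ} (hu : u^2 ≤ 1) (hv : v^2 ≤ 1)
    (hc : Complex.normSq c = (1 - u^2) * (1 - v^2)) :
    ∃ x : S3 × S3, Amap x = u ∧ Bmap x = v ∧ Cmap x = c := by
  have hu1 : -1 ≤ u ∧ u ≤ 1 := abs_le.mp (by nlinarith [_root_.sq_abs u, abs_nonneg u])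
  have hv1 : -1 ≤ v ∧ v ≤ 1 := abs_le.mp (by nlinarith [_root_.sq_abs v, abs_nonneg v])
  set r₁ : ℝ := Real.sqrt ((1 + u)/2) with hr₁
  set ρ₁ : ℝ := Real.sqrt ((1 - u)/2) with hρ₁
  set r₂ : ℝ := Real.sqrt ((1 + v)/2) with hr₂
  set ρ₂ : ℝ := Real.sqrt ((1 - v)/2) with hρ₂
  have hr₁sq : r₁^2 = (1 + u)/2 := Real.sq_sqrt (by linarith [hu1.1])
  have hρ₁sq : ρ₁^2 = (1 - u)/2 := Real.sq_sqrt (by linarith [hu1.2])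
  have hr₂sq : r₂^2 = (1 + v)/2 := Real.sq_sqrt (by linarith [hv1.1])
  have hρ₂sq : ρ₂^2 = (1 - v)/2 := Real.sq_sqrt (by linarith [hv1.2])
  have hs1 : Complex.normSq (r₁ : ℂ) + Complex.normSq (ρ₁ : ℂ) = 1 := by
    rw [Complex.normSq_ofReal, Complex.normSq_ofReal]; nlinarith
  by_cases hzero : r₁ * ρ₁ * r₂ = 0
  · have hprod0 : (1 - u^2) * (1 - v^2) = 0 := by
      rcases mul_eq_zero.mp hzero with h | h
      · rcases mul_eq_zero.mp h with h | h
        · rw [h] at hr₁sq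
          have : (1 + u)/2 = 0 := by simpa using hr₁sq.symm
          nlinarith
        · rw [h] at hρ₁sq
          have : (1 - u)/2 = 0 := by simpa using hρ₁sq.symm
          nlinarith
      · rw [h] at hr₂sq
        have : (1 + v)/2 = 0 := by simpa using hr₂sq.symm
        nlinarith
    have hc0 : c = 0 := by
      rw [← Complex.normSq_eq_zero, hc]; exact hprod0
    have hs2 : Complex.normSq (r₂ : ℂ) + Complex.normSq (ρ₂ : ℂ) = 1 := by
      rw [Complex.normSq_ofReal, Complex.normSq_ofReal]; nlinarith
    refine ⟨(mkS _ _ hs1, mkS _ _ hs2), ?_, ?_, ?_⟩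
    · unfold Amap
      rw [Zc_mkS, Wc_mkS, Complex.normSq_ofReal, Complex.normSq_ofReal]; nlinarith
    · unfold Bmap
      rw [Zc_mkS, Wc_mkS, Complex.normSq_ofReal, Complex.normSq_ofReal]; nlinarith
    · unfold Cmap
      rw [Zc_mkS, Wc_mkS, Zc_mkS, Wc_mkS, hc0, Complex.conj_ofReal]
      have : ((r₁ : ℂ) * (ρ₁ : ℂ) * (r₂ : ℂ)) = 0 := by
        exact_mod_cast hzero
      rcases mul_eq_zero.mp this with h | h
      · rcases mul_eq_zero.mp h with h | h <;> rw [h] <;> try ring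
      · rw [h]; try ring
  · -- main case: denominators nonzero
    have h1u : 0 < 1 + u := by
      rcases lt_or_eq_of_le (by linarith [hu1.1] : (0:ℝ) ≤ 1 + u) with h | h
      · exact h
      · exfalso; apply hzero
        have : r₁ = 0 := by rw [hr₁, ← h]; simp
        rw [this]; ring
    have h2u : 0 < 1 - u := by
      rcases lt_or_eq_of_le (by linarith [hu1.2] : (0:ℝ) ≤ 1 - u) with h | h
      · exact h
      · exfalso; apply hzero
        have : ρ₁ = 0 := by rw [hρ₁, ← h]; simp
        rw [this]; ring
    have h1v : 0 < 1 + v := by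
      rcases lt_or_eq_of_le (by linarith [hv1.1] : (0:ℝ) ≤ 1 + v) with h | h
      · exact h
      · exfalso; apply hzero
        have : r₂ = 0 := by rw [hr₂, ← h]; simp
        rw [this]; ring
    set R : ℝ := 4 * (r₁ * ρ₁ * r₂) with hR
    have hRne : R ≠ 0 := by
      rw [hR]; exact mul_ne_zero (by norm_num) hzero
    have hRCne : ((R : ℝ) : ℂ) ≠ 0 := Complex.ofReal_ne_zero.mpr hRne
    set w₂ : ℂ := c / ((R : ℝ) : ℂ) with hw₂
    have hRsq : R^2 = 2 * ((1 - u^2) * (1 + v)) := by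
      have e : R^2 = 16 * (r₁^2) * (ρ₁^2) * (r₂^2) := by rw [hR]; ring
      rw [e, hr₁sq, hρ₁sq, hr₂sq]; ring
    have hw₂Sq : Complex.normSq w₂ = (1 - v)/2 := by
      rw [hw₂, map_div₀, hc, Complex.normSq_ofReal]
      rw [show R * R = R^2 by ring, hRsq]
      have hne : (1 - u^2) ≠ 0 := by nlinarith
      field_simp
      ring
    have hs2 : Complex.normSq (r₂ : ℂ) + Complex.normSq w₂ = 1 := by
      rw [Complex.normSq_ofReal, hw₂Sq]; nlinarith
    refine ⟨(mkS _ _ hs1, mkS _ _ hs2), ?_, ?_, ?_⟩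
    · unfold Amap
      rw [Zc_mkS, Wc_mkS, Complex.normSq_ofReal, Complex.normSq_ofReal]; nlinarith
    · unfold Bmap
      rw [Zc_mkS, Wc_mkS, Complex.normSq_ofReal, hw₂Sq]; nlinarith
    · unfold Cmap
      have hr1ne : (r₁ : ℂ) ≠ 0 := Complex.ofReal_ne_zero.mpr (fun h => hzero (by rw [h]; ring))
      have hp1ne : (ρ₁ : ℂ) ≠ 0 := Complex.ofReal_ne_zero.mpr (fun h => hzero (by rw [h]; ring))
      have hr2ne : (r₂ : ℂ) ≠ 0 := Complex.ofReal_ne_zero.mpr (fun h => hzero (by rw [h]; ring))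
      rw [Zc_mkS, Wc_mkS, Zc_mkS, Wc_mkS, Complex.conj_ofReal, hw₂]
      rw [hR]
      push_cast
      field_simp

/-! ### continuity -/

lemma Zc_eq (s : Quaternion ℝ) : Zc s = (s.re : ℂ) + (s.imI : ℂ) * Complex.I := by
  apply Complex.ext <;> simp [Zc]

lemma Wc_eq (s : Quaternion ℝ) : Wc s = (s.imJ : ℂ) + (s.imK : ℂ) * Complex.I := by
  apply Complex.ext <;> simp [Wc]

lemma continuous_Zc : Continuous Zc := by
  have h : Zc = fun s => (s.re : ℂ) + (s.imI : ℂ) * Complex.I := funext Zc_eq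
  rw [h]
  exact (Complex.continuous_ofReal.comp Quaternion.continuous_re).add
    ((Complex.continuous_ofReal.comp Quaternion.continuous_imI).mul continuous_const)

lemma continuous_Wc : Continuous Wc := by
  have h : Wc = fun s => (s.imJ : ℂ) + (s.imK : ℂ) * Complex.I := funext Wc_eq
  rw [h]
  exact (Complex.continuous_ofReal.comp Quaternion.continuous_imJ).add
    ((Complex.continuous_ofReal.comp Quaternion.continuous_imK).mul continuous_const)

lemma cont_z1 : Continuous fun x : S3 × S3 => Zc x.1.1 :=
  continuous_Zc.comp (continuous_subtype_val.comp continuous_fst)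
lemma cont_w1 : Continuous fun x : S3 × S3 => Wc x.1.1 :=
  continuous_Wc.comp (continuous_subtype_val.comp continuous_fst)
lemma cont_z2 : Continuous fun x : S3 × S3 => Zc x.2.1 :=
  continuous_Zc.comp (continuous_subtype_val.comp continuous_snd)
lemma cont_w2 : Continuous fun x : S3 × S3 => Wc x.2.1 :=
  continuous_Wc.comp (continuous_subtype_val.comp continuous_snd)

lemma continuous_Amap : Continuous Amap :=
  (Complex.continuous_normSq.comp cont_z1).sub (Complex.continuous_normSq.comp cont_w1)

lemma continuous_Bmap : Continuous Bmap :=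
  (Complex.continuous_normSq.comp cont_z2).sub (Complex.continuous_normSq.comp cont_w2)

lemma continuous_Cmap : Continuous Cmap := by
  have : Continuous fun x : S3 × S3 => conj' (Wc x.1.1) := continuous_star.comp cont_w1
  exact continuous_const.mul (((cont_z1.mul this).mul cont_z2).mul cont_w2)

lemma continuous_Fv : Continuous Fv := by
  apply Continuous.comp (PiLp.continuous_toLp 2 (fun _ : Fin 4 => ℝ))
  apply continuous_pi
  intro i
  fin_cases i
  · simpa using continuous_Amap
  · simpa using continuous_Bmap
  · simpa [Function.comp_def] using Complex.continuous_re.comp continuous_Cmap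
  · simpa [Function.comp_def] using Complex.continuous_im.comp continuous_Cmap

/-! ### the map to the sphere -/

noncomputable def Psi (x : S3 × S3) : Metric.sphere (0 : EuclideanSpace ℝ (Fin 4)) 1 :=
  ⟨‖Fv x‖⁻¹ • Fv x, by
    rw [mem_sphere_zero_iff_norm, norm_smul, norm_inv, norm_norm]
    exact inv_mul_cancel₀ (norm_Fv_pos x).ne'⟩

lemma continuous_Psi : Continuous Psi :=
  Continuous.subtype_mk
    ((continuous_Fv.norm.inv₀ (fun x => (norm_Fv_pos x).ne')).smul continuous_Fv) _

lemma Psi_respects {x y : S3 × S3} (h : rel16 x y) : Psi x = Psi y := by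
  obtain ⟨hA, hB, hC⟩ := invariant_of_rel h
  have hFv : Fv y = Fv x := by simp [Fv, hA, hB, hC]
  apply Subtype.ext
  show ‖Fv x‖⁻¹ • Fv x = ‖Fv y‖⁻¹ • Fv y
  rw [hFv]

lemma rel_of_invariants {x y : S3 × S3} (hA : Amap x = Amap y) (hB : Bmap x = Bmap y)
    (hC : Cmap x = Cmap y) : rel16 x y := by
  rw [rel16_iff]
  have s1x := sum_one x.1
  have s1y := sum_one y.1
  have s2x := sum_one x.2
  have s2y := sum_one y.2
  unfold Amap at hA
  unfold Bmap at hB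
  have h1 : Complex.normSq (Zc x.1.1) = Complex.normSq (Zc y.1.1) := by linarith
  have h2 : Complex.normSq (Wc x.1.1) = Complex.normSq (Wc y.1.1) := by linarith
  have h3 : Complex.normSq (Zc x.2.1) = Complex.normSq (Zc y.2.1) := by linarith
  have h4 : Complex.normSq (Wc x.2.1) = Complex.normSq (Wc y.2.1) := by linarith
  have hc' : Zc x.1.1 * conj' (Wc x.1.1) * Zc x.2.1 * Wc x.2.1 =
      Zc y.1.1 * conj' (Wc y.1.1) * Zc y.2.1 * Wc y.2.1 := by
    have h4ne : (4 : ℂ) ≠ 0 := by norm_num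
    exact mul_left_cancel₀ h4ne hC
  exact fiberC h1 h2 h3 h4 hc'

lemma Psi_inj {x y : S3 × S3} (h : Psi x = Psi y) : rel16 x y := by
  have hFx := norm_Fv_pos x
  have hFy := norm_Fv_pos y
  have hval : ‖Fv x‖⁻¹ • Fv x = ‖Fv y‖⁻¹ • Fv y := congrArg Subtype.val h
  set l : ℝ := ‖Fv y‖ / ‖Fv x‖ with hldef
  have hlpos : 0 < l := div_pos hFy hFx
  have hFv : Fv y = l • Fv x := by
    calc Fv y = ‖Fv y‖ • (‖Fv y‖⁻¹ • Fv y) := by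
          rw [smul_smul, mul_inv_cancel₀ hFy.ne', one_smul]
    _ = ‖Fv y‖ • (‖Fv x‖⁻¹ • Fv x) := by rw [hval]
    _ = l • Fv x := by rw [smul_smul, hldef, div_eq_mul_inv]
  have eA : Amap y = l * Amap x := by
    have : Fv y 0 = (l • Fv x) 0 := by rw [hFv]
    rwa [Fv_zero, PiLp.smul_apply, Fv_zero, smul_eq_mul] at this
  have eB : Bmap y = l * Bmap x := by
    have : Fv y 1 = (l • Fv x) 1 := by rw [hFv]
    rwa [Fv_one, PiLp.smul_apply, Fv_one, smul_eq_mul] at this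
  have eCre : (Cmap y).re = l * (Cmap x).re := by
    have : Fv y 2 = (l • Fv x) 2 := by rw [hFv]
    rwa [Fv_two, PiLp.smul_apply, Fv_two, smul_eq_mul] at this
  have eCim : (Cmap y).im = l * (Cmap x).im := by
    have : Fv y 3 = (l • Fv x) 3 := by rw [hFv]
    rwa [Fv_three, PiLp.smul_apply, Fv_three, smul_eq_mul] at this
  have eC : Cmap y = (l : ℂ) * Cmap x := by
    apply Complex.ext
    · rw [eCre]; simp [Complex.mul_re]
    · rw [eCim]; simp [Complex.mul_im]
  have hl1 : l = 1 := by
    rcases le_total 1 l with hl | hl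
    · exact radial hl (Amap_sq_le x) (Bmap_sq_le x) (Amap_sq_le y) (Bmap_sq_le y)
        (normSq_Cmap x) (normSq_Cmap y) eA eB eC
    · have hinv : 1 ≤ l⁻¹ := (one_le_inv_iff₀).mpr ⟨hlpos, hl⟩
      have eA' : Amap x = l⁻¹ * Amap y := by rw [eA]; field_simp
      have eB' : Bmap x = l⁻¹ * Bmap y := by rw [eB]; field_simp
      have eC' : Cmap x = ((l⁻¹ : ℝ) : ℂ) * Cmap y := by
        rw [eC]
        have : ((l : ℝ) : ℂ) ≠ 0 := by
          simpa using hlpos.ne'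
        push_cast
        field_simp
      have := radial hinv (Amap_sq_le y) (Bmap_sq_le y) (Amap_sq_le x) (Bmap_sq_le x)
        (normSq_Cmap y) (normSq_Cmap x) eA' eB' eC'
      have : l⁻¹ = 1 := this
      field_simp at this
      exact this.symm
  rw [hl1] at eA eB eC
  apply rel_of_invariants
  · rw [eA]; ring
  · rw [eB]; ring
  · rw [eC]; simp

set_option maxHeartbeats 1000000 in
lemma Psi_surj : Function.Surjective Psi := by
  rintro ⟨w, hw⟩
  have hn : ‖w‖ = 1 := mem_sphere_zero_iff_norm.mp hw
  set a := w 0 with hadef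
  set b := w 1 with hbdef
  set c2 := w 2 with hc2def
  set c3 := w 3 with hc3def
  have hsum : a^2 + b^2 + c2^2 + c3^2 = 1 := by
    have h := norm_sq_euclid w
    rw [hn] at h
    rw [Fin.sum_univ_four] at h
    norm_num at h
    linarith
  have hab2 : a^2 + b^2 ≤ 1 := by nlinarith [sq_nonneg c2, sq_nonneg c3]
  set p := a^2 * b^2 with hpdef
  have hp0 : 0 ≤ p := by positivity
  have hp : 4 * p ≤ 1 := by
    nlinarith [sq_nonneg (a^2 - b^2), sq_nonneg a, sq_nonneg b]
  set q := Real.sqrt (1 - 4*p) with hqdef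
  have hq0 : 0 ≤ q := Real.sqrt_nonneg _
  have hqsq : q^2 = 1 - 4*p := Real.sq_sqrt (by linarith)
  have hq1 : (0:ℝ) < 1 + q := by linarith
  set S := 2 / (1 + q) with hSdef
  have hSpos : 0 < S := by positivity
  have hkey : 1 - S + S^2 * p = 0 := by
    rw [hSdef]
    field_simp
    linear_combination hqsq
  set t := Real.sqrt S with htdef
  have htsq : t^2 = S := Real.sq_sqrt hSpos.le
  have htpos : 0 < t := Real.sqrt_pos.mpr hSpos
  have hSa : S * a^2 ≤ 1 := by
    have h2a : 2 * a^2 ≤ 1 + q := by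
      rcases le_or_gt (2*a^2) 1 with h | h
      · linarith
      · have h1 : (2*a^2 - 1)^2 ≤ q^2 := by
          rw [hqsq, hpdef]
          nlinarith [sq_nonneg a, sq_nonneg b]
        nlinarith [hq0]
    rw [hSdef, div_mul_eq_mul_div, div_le_one hq1]
    linarith
  have hSb : S * b^2 ≤ 1 := by
    have h2b : 2 * b^2 ≤ 1 + q := by
      rcases le_or_gt (2*b^2) 1 with h | h
      · linarith
      · have h1 : (2*b^2 - 1)^2 ≤ q^2 := by
          rw [hqsq, hpdef]
          nlinarith [sq_nonneg a, sq_nonneg b]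
        nlinarith [hq0]
    rw [hSdef, div_mul_eq_mul_div, div_le_one hq1]
    linarith
  have hu : (t*a)^2 ≤ 1 := by rw [mul_pow, htsq]; exact hSa
  have hv : (t*b)^2 ≤ 1 := by rw [mul_pow, htsq]; exact hSb
  set cC : ℂ := ⟨t*c2, t*c3⟩ with hcCdef
  have hcC : Complex.normSq cC = (1 - (t*a)^2) * (1 - (t*b)^2) := by
    have e0 : Complex.normSq cC = S * (c2^2 + c3^2) := by
      rw [hcCdef, Complex.normSq_mk]
      linear_combination (c2^2 + c3^2) * htsq
    rw [e0, mul_pow, mul_pow, htsq]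
    linear_combination (-1 : ℝ) * hkey + S * hsum
  obtain ⟨x, hA, hB, hC⟩ := exists_point hu hv hcC
  have hFvx : Fv x = t • w := by
    ext i
    fin_cases i
    · simp [Fv, WithLp.equiv_symm_apply, PiLp.toLp_apply, hA, hadef]
    · simp [Fv, WithLp.equiv_symm_apply, PiLp.toLp_apply, hB, hbdef]
    · simp [Fv, WithLp.equiv_symm_apply, PiLp.toLp_apply, hC, hcCdef, hc2def]
    · simp [Fv, WithLp.equiv_symm_apply, PiLp.toLp_apply, hC, hcCdef, hc3def]
  have hnorm : ‖Fv x‖ = t := by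
    rw [hFvx, norm_smul, hn, Real.norm_of_nonneg htpos.le, mul_one]
  refine ⟨x, ?_⟩
  apply Subtype.ext
  show ‖Fv x‖⁻¹ • Fv x = w
  rw [hnorm, hFvx, smul_smul, inv_mul_cancel₀ htpos.ne', one_smul]

instance : CompactSpace S3 := by
  have e : {s : Quaternion ℝ | ‖s‖ = 1} = Metric.sphere (0 : Quaternion ℝ) 1 := by
    ext s; simp [Metric.mem_sphere, dist_eq_norm]
  have h : IsCompact {s : Quaternion ℝ | ‖s‖ = 1} := by
    rw [e]; exact isCompact_sphere 0 1
  exact isCompact_iff_compactSpace.mp h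

instance : CompactSpace (Quot rel16) := by
  constructor
  have hsurj : Function.Surjective (Quot.mk rel16) := fun q => Quot.exists_rep q
  rw [← hsurj.range_eq]
  exact isCompact_range continuous_quot_mk

end Aux

/-- `(S³ × S³)/T³ ≅ S³` for the action `(t₁,t₂,t₃)·(s₁,s₂) = (t₁s₁t₂⁻¹, t₂s₂t₃)`. -/
theorem S3xS3_quotient_T3_homeomorphic_S3' :
    Nonempty (Quot rel16 ≃ₜ Metric.sphere (0 : EuclideanSpace ℝ (Fin 4)) 1) := by
  have hresp : ∀ a b, rel16 a b → Psi a = Psi b := fun a b h => Psi_respects h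
  have hGc : Continuous (Quot.lift Psi hresp) := continuous_quot_lift hresp continuous_Psi
  have hGinj : Function.Injective (Quot.lift Psi hresp) := by
    intro q q'
    induction q using Quot.ind with | _ x =>
    induction q' using Quot.ind with | _ y =>
    intro h
    exact Quot.sound (Psi_inj h)
  have hGsurj : Function.Surjective (Quot.lift Psi hresp) := by
    intro ω
    obtain ⟨x, hx⟩ := Psi_surj ω
    exact ⟨Quot.mk _ x, hx⟩
  exact ⟨Continuous.homeoOfEquivCompactToT2
    (f := Equiv.ofBijective (Quot.lift Psi hresp) ⟨hGinj, hGsurj⟩) hGc⟩
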